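/- arXiv:1702.02689 — 2 statements merged into one kernel-verified Lean document; each statement's English description precedes it below -/
import Mathlib

section
/- Let n ≥ 3, N = ⌊n/2⌋, and 1 ≤ i ≤ N. The N+1 real numbers cos(2πij/n) for j = 0, 1, …, N are pairwise distinct if and only if gcd(i, n) = 1. -/
theorem cos_distinct_iff_coprime (n : ℕ) (hn : 3 ≤ n) (i : ℕ)
    (hi : 1 ≤ i) (hi' : i ≤ n / 2) :
    (∀ j k : Fin (n / 2 + 1),
        Real.cos (2 * Real.pi * i * j.val / n) = Real.cos (2 * Real.pi * i * k.val / n)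
          → j = k)
      ↔ Nat.Coprime i n := by
  have hn0 : (n : ℝ) ≠ 0 := by positivity
  have hpi : Real.pi ≠ 0 := Real.pi_ne_zero
  constructor
  · intro h
    by_contra hcop
    set d := Nat.gcd i n with hd
    have hdi : d ∣ i := Nat.gcd_dvd_left i n
    have hdn : d ∣ n := Nat.gcd_dvd_right i n
    have hd0 : d ≠ 0 := by
      intro h0
      have := Nat.gcd_eq_zero_iff.mp (hd ▸ h0)
      omega
    have hd2 : 2 ≤ d := by
      rcases Nat.lt_or_ge d 2 with h' | h'
      · exfalso; exact hcop (by omega)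
      · exact h'
    have hle : n / d ≤ n / 2 := Nat.div_le_div_left hd2 (by omega)
    have hpos : 0 < n / d := Nat.div_pos (Nat.le_of_dvd (by omega) hdn) (by omega)
    have heq : Real.cos (2 * Real.pi * i * ((⟨n / d, by omega⟩ : Fin (n / 2 + 1)) : ℕ) / n)
        = Real.cos (2 * Real.pi * i * ((⟨0, by omega⟩ : Fin (n / 2 + 1)) : ℕ) / n) := by
      obtain ⟨a, ha⟩ := hdi
      obtain ⟨b, hb⟩ := hdn
      have hb' : n / d = b := by rw [hb]; exact Nat.mul_div_cancel_left b (by omega)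
      have hdr : (d : ℝ) ≠ 0 := by exact_mod_cast hd0
      have hbr : (b : ℝ) ≠ 0 := by
        have : b ≠ 0 := by rintro rfl; omega
        exact_mod_cast this
      have key : 2 * Real.pi * i * ((n / d : ℕ) : ℝ) / n = (a : ℝ) * (2 * Real.pi) := by
        rw [hb']
        have hia : (i : ℝ) = d * a := by exact_mod_cast congrArg Nat.cast ha
        have hnn : (n : ℝ) = d * b := by exact_mod_cast congrArg Nat.cast hb
        rw [hia, hnn]
        field_simp
      simp only [key]
      rw [Real.cos_nat_mul_two_pi]
      norm_num
    have := h _ _ heq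
    have : n / d = 0 := congrArg Fin.val this
    omega
  · intro hcop j k hjk
    have hcop' : IsCoprime ((n : ℤ)) ((i : ℤ)) := by
      rw [Int.isCoprime_iff_gcd_eq_one, Int.gcd_natCast_natCast, Nat.gcd_comm]
      exact hcop
    have hj := j.isLt
    have hk := k.isLt
    rw [Real.cos_eq_cos_iff] at hjk
    obtain ⟨m, hm | hm⟩ := hjk
    · have hr : (i : ℝ) * k = m * n + i * j := by
        field_simp at hm
        nlinarith [hm, Real.pi_pos]
      have hz : (i : ℤ) * k = m * n + i * j := by exact_mod_cast hr
      have hdvd : (n : ℤ) ∣ (i : ℤ) * ((k : ℤ) - j) := ⟨m, by linear_combination hz⟩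
      obtain ⟨c, hc⟩ := hcop'.dvd_of_dvd_mul_left hdvd
      have hjn : ((j : ℕ) : ℤ) < n := by exact_mod_cast (by omega : j.val < n)
      have hkn : ((k : ℕ) : ℤ) < n := by exact_mod_cast (by omega : k.val < n)
      have hj0 : (0 : ℤ) ≤ ((j : ℕ) : ℤ) := Int.natCast_nonneg _
      have hk0 : (0 : ℤ) ≤ ((k : ℕ) : ℤ) := Int.natCast_nonneg _
      have hnpos : (0 : ℤ) < n := by exact_mod_cast (by omega : 0 < n)
      have hc0 : c = 0 := by
        rcases lt_trichotomy c 0 with h' | h' | h'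
        · exfalso; nlinarith
        · exact h'
        · exfalso; nlinarith
      rw [hc0, mul_zero, sub_eq_zero] at hc
      exact Fin.ext (by exact_mod_cast hc.symm)
    · have hr : (i : ℝ) * k = m * n - i * j := by
        field_simp at hm
        nlinarith [hm, Real.pi_pos]
      have hz : (i : ℤ) * k = m * n - i * j := by exact_mod_cast hr
      have hdvd : (n : ℤ) ∣ (i : ℤ) * ((k : ℤ) + j) := ⟨m, by linear_combination hz⟩
      have hnd : (n : ℤ) ∣ ((k : ℤ) + j) := hcop'.dvd_of_dvd_mul_left hdvd
      have hnd' : n ∣ (k.val + j.val) := by exact_mod_cast hnd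
      obtain ⟨c, hc⟩ := hnd'
      have hcle : c ≤ 1 := by
        by_contra h'
        push_neg at h'
        have h2 : n * 2 ≤ n * c := Nat.mul_le_mul_left n h'
        rw [← hc] at h2
        omega
      interval_cases c <;> exact Fin.ext (by omega)
end

section
/- Let n be odd, N = (n-1)/2, and V the N×N DST matrix [V]_{j,k} = (2/(i√n))·sin(2πjk/n). For 1 ≤ m ≤ N, define the real symmetric matrix T_m by [T_m]_{j,k} = x_{m,j-k} - x_{m,j+k}, where x_{m,a} = 1 if a ≡ ±m (mod n) and 0 otherwise, and let D_m = 2·diag(cos(2πm/n), cos(4πm/n), …, cos(2πNm/n)). Then T_m = V·D_m·V*. -/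
/-- The `N × N` DST matrix, with entries `(2/(i√n))·sin(2πjk/n)` for `1 ≤ j, k ≤ N`. -/
noncomputable def dstMatrix (n N : ℕ) : Matrix (Fin N) (Fin N) ℂ :=
  fun j k => (2 / (Complex.I * Real.sqrt n)) *
    Real.sin (2 * Real.pi * (j.val + 1) * (k.val + 1) / n)

/-- `x_{m,a} = 1` if `a ≡ ±m (mod n)`, and `0` otherwise. -/
def xInd (n : ℕ) (m : ℕ) (a : ℤ) : ℂ :=
  if (a : ZMod n) = (m : ZMod n) ∨ (a : ZMod n) = -(m : ZMod n) then 1 else 0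

/-- The matrix `T_m` with `[T_m]_{j,k} = x_{m,j-k} - x_{m,j+k}`, indices `1 ≤ j,k ≤ N`. -/
def Tmat (n N m : ℕ) : Matrix (Fin N) (Fin N) ℂ :=
  fun j k => xInd n m ((j.val : ℤ) + 1 - ((k.val : ℤ) + 1))
    - xInd n m ((j.val : ℤ) + 1 + ((k.val : ℤ) + 1))

/-- `D_m = 2·diag(cos(2πm/n), …, cos(2πNm/n))`. -/
noncomputable def Dmat (n N m : ℕ) : Matrix (Fin N) (Fin N) ℂ :=
  Matrix.diagonal fun j => 2 * (Real.cos (2 * Real.pi * m * (j.val + 1) / n) : ℂ)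

namespace TmatAux

noncomputable def w (n : ℕ) (a : ℤ) : ℂ := Complex.exp (2 * Real.pi * Complex.I * a / n)

lemma w_add (n : ℕ) (a b : ℤ) : w n (a + b) = w n a * w n b := by
  rw [w, w, w, ← Complex.exp_add]; congr 1; push_cast; ring

lemma w_zero (n : ℕ) : w n 0 = 1 := by simp [w]

lemma w_ne_zero (n : ℕ) (a : ℤ) : w n a ≠ 0 := Complex.exp_ne_zero _

lemma w_mul_neg (n : ℕ) (a : ℤ) : w n a * w n (-a) = 1 := by
  rw [← w_add]; simp [w_zero]

lemma w_neg (n : ℕ) (a : ℤ) : w n (-a) = (w n a)⁻¹ :=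
  eq_inv_of_mul_eq_one_right (by rw [← w_add]; simp [w_zero])

lemma w_nmul (n : ℕ) (hn : 0 < n) (k : ℤ) : w n ((n : ℤ) * k) = 1 := by
  rw [w]
  rw [show (2 * Real.pi * Complex.I * ((n:ℤ) * k : ℤ) / n : ℂ) = (k : ℤ) * (2 * Real.pi * Complex.I) by
    have : (n : ℂ) ≠ 0 := by exact_mod_cast hn.ne'
    field_simp; push_cast; ring]
  exact Complex.exp_int_mul_two_pi_mul_I k

lemma w_eq_one_iff (n : ℕ) (hn : 0 < n) (a : ℤ) : w n a = 1 ↔ (n : ℤ) ∣ a := by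
  constructor
  · intro h
    rw [w, Complex.exp_eq_one_iff] at h
    obtain ⟨k, hk⟩ := h
    refine ⟨k, ?_⟩
    have hn0 : (n : ℂ) ≠ 0 := by exact_mod_cast hn.ne'
    have hπ : (Real.pi : ℂ) ≠ 0 := by exact_mod_cast Real.pi_ne_zero
    have : (a : ℂ) = (k : ℂ) * n := by
      field_simp at hk
      have h2 : (2 : ℂ) * Real.pi * Complex.I ≠ 0 := by
        simp [Complex.I_ne_zero, hπ]
      linear_combination hk
    have : (a : ℂ) = (n : ℂ) * k := by rw [this]; ring
    exact_mod_cast this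
  · rintro ⟨k, rfl⟩
    exact w_nmul n hn k

lemma sum_w (n : ℕ) (hn : 0 < n) (a : ℤ) :
    ∑ l ∈ Finset.range n, w n (a * l) = if (n : ℤ) ∣ a then (n : ℂ) else 0 := by
  have hpow : ∀ l : ℕ, w n (a * l) = (w n a) ^ l := by
    intro l
    rw [w, w, ← Complex.exp_nat_mul]
    congr 1; push_cast; ring
  simp only [hpow]
  by_cases h : (n : ℤ) ∣ a
  · rw [if_pos h, (w_eq_one_iff n hn a).2 h]; simp
  · rw [if_neg h, geom_sum_eq (fun hc => h ((w_eq_one_iff n hn a).1 hc))]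
    have : w n a ^ n = 1 := by
      rw [← hpow n]
      rw [mul_comm]
      exact w_nmul n hn a
    simp [this]

end TmatAux

namespace TmatAux

lemma S_eval (n N : ℕ) (hN : n = 2 * N + 1) (a : ℤ) :
    ∑ l ∈ Finset.range N, (w n (a * (l + 1)) + w n (-a * (l + 1)))
      = (if (n : ℤ) ∣ a then (n : ℂ) else 0) - 1 := by
  have hn : 0 < n := by omega
  have key := sum_w n hn a
  have hsplit : n = 1 + N + N := by omega
  rw [show Finset.range n = Finset.range (1 + N + N) by rw [← hsplit],
    Finset.sum_range_add, Finset.sum_range_add, Finset.sum_range_one] at key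
  simp only [Nat.cast_zero, mul_zero, w_zero] at key
  -- key : 1 + ∑ i in range N, w n (a * (1 + i)) + ∑ i in range N, w n (a * (1 + N + i)) = ...
  have h1 : ∀ i ∈ Finset.range N, w n (a * ((1 : ℕ) + i : ℕ)) = w n (a * (i + 1)) := by
    intro i _; congr 1; push_cast; ring
  have h2 : ∀ i ∈ Finset.range N, w n (a * ((1 + N + i : ℕ) : ℤ)) = w n (-a * (((N - 1 - i : ℕ) : ℤ) + 1)) := by
    intro i hi
    rw [Finset.mem_range] at hi
    have hc : ((N - 1 - i : ℕ) : ℤ) = (N : ℤ) - 1 - i := by omega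
    have harg : a * ((1 + N + i : ℕ) : ℤ) = (n : ℤ) * a + -a * (((N - 1 - i : ℕ) : ℤ) + 1) := by
      rw [hc]; push_cast [hN]; ring
    rw [harg, w_add, w_nmul n hn a, one_mul]
  rw [Finset.sum_congr rfl h1, Finset.sum_congr rfl h2,
    Finset.sum_range_reflect (fun i => w n (-a * ((i : ℤ) + 1))) N] at key
  have hfin : ∑ l ∈ Finset.range N, (w n (a * (l + 1)) + w n (-a * (l + 1)))
      = (∑ i ∈ Finset.range N, w n (a * (i + 1))) + ∑ i ∈ Finset.range N, w n (-a * (i + 1)) := by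
    rw [← Finset.sum_add_distrib]
  rw [hfin]
  rw [← key]; ring

end TmatAux

namespace TmatAux

lemma key (n : ℕ) (hn : 0 < n) (A B C : ℤ) (l : ℕ) :
    (2 / (Complex.I * Real.sqrt n)) * ((Real.sin (2 * Real.pi * (A : ℝ) * (l : ℝ) / n) : ℝ) : ℂ)
      * (2 * ((Real.cos (2 * Real.pi * (C : ℝ) * (l : ℝ) / n) : ℝ) : ℂ))
      * (starRingEnd ℂ) ((2 / (Complex.I * Real.sqrt n)) * ((Real.sin (2 * Real.pi * (B : ℝ) * (l : ℝ) / n) : ℝ) : ℂ))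
    = (1 / (n : ℂ)) * ((w n ((A - B - C) * l) + w n (-((A - B - C) * l)))
        + (w n ((A - B + C) * l) + w n (-((A - B + C) * l)))
        - (w n ((A + B - C) * l) + w n (-((A + B - C) * l)))
        - (w n ((A + B + C) * l) + w n (-((A + B + C) * l)))) := by
  have hn0 : (n : ℂ) ≠ 0 := by exact_mod_cast hn.ne'
  have hs : (Real.sqrt n : ℂ) * (Real.sqrt n : ℂ) = (n : ℂ) := by
    norm_cast
    exact Real.mul_self_sqrt (Nat.cast_nonneg n)
  have hexp : ∀ a : ℤ, Complex.exp (((2 * Real.pi * (a : ℝ) * (l : ℝ) / n : ℝ) : ℂ) * Complex.I)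
      = w n (a * l) := by
    intro a
    rw [w]
    congr 1
    push_cast
    ring
  have hexp' : ∀ a : ℤ, Complex.exp (-(((2 * Real.pi * (a : ℝ) * (l : ℝ) / n : ℝ) : ℂ)) * Complex.I)
      = w n (-(a * l)) := by
    intro a
    rw [w]
    congr 1
    push_cast
    ring
  have hw : ∀ a b : ℤ, w n ((a + b) * l) = w n (a * l) * w n (b * l) := by
    intro a b
    rw [← w_add]
    congr 1
    ring
  have hwneg : ∀ a : ℤ, w n (-a * l) = (w n (a * l))⁻¹ := by
    intro a
    rw [show (-a) * (l : ℤ) = -(a * l) by ring, w_neg]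
  have hwneg' : ∀ a : ℤ, w n (-(a * l)) = (w n (a * l))⁻¹ := by
    intro a
    rw [w_neg]
  simp only [map_mul, map_div₀, Complex.conj_I, Complex.conj_ofReal, map_ofNat]
  have hconst : (2 / (Complex.I * ((Real.sqrt n : ℝ) : ℂ))) * (2 / (-Complex.I * ((Real.sqrt n : ℝ) : ℂ)))
      = 4 / (n : ℂ) := by
    rw [div_mul_div_comm]
    congr 1
    · norm_num
    · linear_combination (-(((Real.sqrt n : ℝ) : ℂ) * ((Real.sqrt n : ℝ) : ℂ))) * Complex.I_mul_I + hs
  rw [show (2 / (Complex.I * ((Real.sqrt n : ℝ) : ℂ))) * ((Real.sin (2 * Real.pi * (A : ℝ) * (l : ℝ) / n) : ℝ) : ℂ)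
      * (2 * ((Real.cos (2 * Real.pi * (C : ℝ) * (l : ℝ) / n) : ℝ) : ℂ))
      * ((2 / (-Complex.I * ((Real.sqrt n : ℝ) : ℂ))) * ((Real.sin (2 * Real.pi * (B : ℝ) * (l : ℝ) / n) : ℝ) : ℂ))
    = ((2 / (Complex.I * ((Real.sqrt n : ℝ) : ℂ))) * (2 / (-Complex.I * ((Real.sqrt n : ℝ) : ℂ))))
      * (((Real.sin (2 * Real.pi * (A : ℝ) * (l : ℝ) / n) : ℝ) : ℂ)
        * ((2 * ((Real.cos (2 * Real.pi * (C : ℝ) * (l : ℝ) / n) : ℝ) : ℂ))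
          * ((Real.sin (2 * Real.pi * (B : ℝ) * (l : ℝ) / n) : ℝ) : ℂ))) from by ring,
    hconst]
  rw [Complex.ofReal_sin, Complex.ofReal_sin, Complex.ofReal_cos,
    Complex.sin, Complex.sin, Complex.cos, hexp, hexp, hexp, hexp', hexp', hexp']
  rw [show A - B - C = A + -B + -C by ring, show A - B + C = A + -B + C by ring,
    show A + B - C = A + B + -C by ring]
  simp only [hw, hwneg, hwneg', mul_inv, inv_inv]
  linear_combination ((1 / (n : ℂ)) * ((w n (A * l))⁻¹ - w n (A * l))
    * ((w n (B * l))⁻¹ - w n (B * l)) * (w n (C * l) + (w n (C * l))⁻¹)) * Complex.I_mul_I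

end TmatAux

namespace TmatAux

lemma S_eval' (n N : ℕ) (hN : n = 2 * N + 1) (a : ℤ) :
    ∑ l ∈ Finset.range N, (w n (a * ((l + 1 : ℕ) : ℤ)) + w n (-(a * ((l + 1 : ℕ) : ℤ))))
      = (if (n : ℤ) ∣ a then (n : ℂ) else 0) - 1 := by
  rw [← S_eval n N hN a]
  refine Finset.sum_congr rfl fun l _ => ?_
  have h1 : a * ((l + 1 : ℕ) : ℤ) = a * ((l : ℤ) + 1) := by push_cast; ring
  rw [h1, show -(a * ((l : ℤ) + 1)) = -a * ((l : ℤ) + 1) by ring]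

lemma xInd_split (n m : ℕ) (hm : 1 ≤ m) (hm2 : 2 * m < n) (a : ℤ) :
    xInd n m a = (if (n : ℤ) ∣ (a - m) then (1 : ℂ) else 0)
      + (if (n : ℤ) ∣ (a + m) then (1 : ℂ) else 0) := by
  have e1 : ((a : ZMod n) = (m : ZMod n)) ↔ (n : ℤ) ∣ (a - m) := by
    rw [← ZMod.intCast_zmod_eq_zero_iff_dvd]
    push_cast
    rw [sub_eq_zero]
  have e2 : ((a : ZMod n) = -(m : ZMod n)) ↔ (n : ℤ) ∣ (a + m) := by
    rw [← ZMod.intCast_zmod_eq_zero_iff_dvd]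
    push_cast
    rw [add_eq_zero_iff_eq_neg]
  have hnot : ¬((n : ℤ) ∣ (a - m) ∧ (n : ℤ) ∣ (a + m)) := by
    rintro ⟨h1, h2⟩
    have h3 := dvd_sub h2 h1
    rw [show a + (m : ℤ) - (a - (m : ℤ)) = 2 * (m : ℤ) by ring] at h3
    have h4 := Int.le_of_dvd (by positivity) h3
    omega
  rw [xInd]
  simp only [e1, e2]
  by_cases h1 : (n : ℤ) ∣ (a - m) <;> by_cases h2 : (n : ℤ) ∣ (a + m) <;>
    simp [h1, h2]
  exact absurd ⟨h1, h2⟩ hnot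

end TmatAux

open TmatAux in
theorem Tmat_eq_VDV (n : ℕ) (hodd : Odd n) (hn : 3 ≤ n) (m : ℕ)
    (hm : 1 ≤ m) (hm' : m ≤ (n - 1) / 2) :
    Tmat n ((n - 1) / 2) m
      = dstMatrix n ((n - 1) / 2) * Dmat n ((n - 1) / 2) m
          * (dstMatrix n ((n - 1) / 2)).conjTranspose := by
  obtain ⟨N, hN⟩ := hodd
  have hNval : (n - 1) / 2 = N := by omega
  rw [hNval]
  have hn' : 0 < n := by omega
  have hn0 : (n : ℂ) ≠ 0 := by exact_mod_cast hn'.ne'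
  ext j k
  rw [Matrix.mul_apply]
  simp only [Matrix.mul_diagonal, Matrix.conjTranspose_apply, RCLike.star_def,
    dstMatrix, Dmat, Tmat, Matrix.diagonal_apply_eq]
  have hterm : ∀ x : Fin N,
      2 / (Complex.I * (Real.sqrt n : ℂ))
          * ((Real.sin (2 * Real.pi * ((j.val : ℝ) + 1) * ((x.val : ℝ) + 1) / n) : ℂ))
        * (2 * ((Real.cos (2 * Real.pi * (m : ℝ) * ((x.val : ℝ) + 1) / n) : ℂ)))
        * (starRingEnd ℂ) (2 / (Complex.I * (Real.sqrt n : ℂ))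
          * ((Real.sin (2 * Real.pi * ((k.val : ℝ) + 1) * ((x.val : ℝ) + 1) / n) : ℂ)))
      = (1 / (n : ℂ)) * ((w n ((((j.val : ℤ) + 1) - ((k.val : ℤ) + 1) - (m : ℤ)) * ((x.val + 1 : ℕ) : ℤ))
            + w n (-((((j.val : ℤ) + 1) - ((k.val : ℤ) + 1) - (m : ℤ)) * ((x.val + 1 : ℕ) : ℤ))))
          + (w n ((((j.val : ℤ) + 1) - ((k.val : ℤ) + 1) + (m : ℤ)) * ((x.val + 1 : ℕ) : ℤ))
            + w n (-((((j.val : ℤ) + 1) - ((k.val : ℤ) + 1) + (m : ℤ)) * ((x.val + 1 : ℕ) : ℤ))))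
          - (w n ((((j.val : ℤ) + 1) + ((k.val : ℤ) + 1) - (m : ℤ)) * ((x.val + 1 : ℕ) : ℤ))
            + w n (-((((j.val : ℤ) + 1) + ((k.val : ℤ) + 1) - (m : ℤ)) * ((x.val + 1 : ℕ) : ℤ))))
          - (w n ((((j.val : ℤ) + 1) + ((k.val : ℤ) + 1) + (m : ℤ)) * ((x.val + 1 : ℕ) : ℤ))
            + w n (-((((j.val : ℤ) + 1) + ((k.val : ℤ) + 1) + (m : ℤ)) * ((x.val + 1 : ℕ) : ℤ))))) := by
    intro x
    have h := key n hn' ((j.val : ℤ) + 1) ((k.val : ℤ) + 1) (m : ℤ) (x.val + 1)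
    rw [show (2 * Real.pi * ((j.val : ℝ) + 1) * ((x.val : ℝ) + 1) / n)
        = 2 * Real.pi * ((((j.val : ℤ) + 1) : ℤ) : ℝ) * (((x.val + 1 : ℕ)) : ℝ) / n by push_cast; ring,
      show (2 * Real.pi * ((k.val : ℝ) + 1) * ((x.val : ℝ) + 1) / n)
        = 2 * Real.pi * ((((k.val : ℤ) + 1) : ℤ) : ℝ) * (((x.val + 1 : ℕ)) : ℝ) / n by push_cast; ring,
      show (2 * Real.pi * (m : ℝ) * ((x.val : ℝ) + 1) / n)
        = 2 * Real.pi * (((m : ℤ)) : ℝ) * (((x.val + 1 : ℕ)) : ℝ) / n by push_cast; ring]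
    exact h
  rw [Finset.sum_congr rfl fun x _ => hterm x, ← Finset.mul_sum]
  rw [Fin.sum_univ_eq_sum_range (fun l => ((w n ((((j.val : ℤ) + 1) - ((k.val : ℤ) + 1) - (m : ℤ)) * ((l + 1 : ℕ) : ℤ)) + w n (-((((j.val : ℤ) + 1) - ((k.val : ℤ) + 1) - (m : ℤ)) * ((l + 1 : ℕ) : ℤ)))) + (w n ((((j.val : ℤ) + 1) - ((k.val : ℤ) + 1) + (m : ℤ)) * ((l + 1 : ℕ) : ℤ)) + w n (-((((j.val : ℤ) + 1) - ((k.val : ℤ) + 1) + (m : ℤ)) * ((l + 1 : ℕ) : ℤ)))) - (w n ((((j.val : ℤ) + 1) + ((k.val : ℤ) + 1) - (m : ℤ)) * ((l + 1 : ℕ) : ℤ)) + w n (-((((j.val : ℤ) + 1) + ((k.val : ℤ) + 1) - (m : ℤ)) * ((l + 1 : ℕ) : ℤ)))) - (w n ((((j.val : ℤ) + 1) + ((k.val : ℤ) + 1) + (m : ℤ)) * ((l + 1 : ℕ) : ℤ)) + w n (-((((j.val : ℤ) + 1) + ((k.val : ℤ) + 1) + (m : ℤ)) * ((l + 1 : ℕ)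 : ℤ)))))) N]
  rw [Finset.sum_sub_distrib, Finset.sum_sub_distrib, Finset.sum_add_distrib]
  rw [S_eval' n N hN, S_eval' n N hN, S_eval' n N hN, S_eval' n N hN]
  have hm2 : 2 * m < n := by omega
  rw [xInd_split n m hm hm2, xInd_split n m hm hm2]
  split_ifs <;> field_simp <;> ring
end
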